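/- arXiv:1812.07687 — 5 statements merged into one kernel-verified Lean document; each statement's English description precedes it below -/
import Mathlib

section
/- Let α ∈ ℕ^{Q_0} be q-divisible, i.e. α = mβ with m ≥ 2 and q^β = 1, θ·β = 0, and suppose α ∈ Σ_{q,θ}. Then α is anisotropic: p(α) > 1, equivalently (α,α) < 0. -/
open Finset

variable {V A : Type*} [Fintype V] [DecidableEq V] [Fintype A]

/-- Euler (Ringel) form of a quiver with arrow set `A`, tail `t`, head `h`. -/
def euler (t h : A → V) (α β : V → ℤ) : ℤ :=
  (∑ i, α i * β i) - ∑ a, α (t a) * β (h a)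

/-- Symmetrised Cartan (Tits) form. -/
def cartan (t h : A → V) (α β : V → ℤ) : ℤ :=
  euler t h α β + euler t h β α

/-- Coordinate vector at a vertex. -/
def evec (i : V) : V → ℤ := fun j => if j = i then 1 else 0

/-- A vertex is loopfree if no arrow is a loop at it. -/
def loopfree (t h : A → V) (i : V) : Prop := ∀ a : A, ¬ (t a = i ∧ h a = i)

/-- Simple reflection at a (loopfree) vertex: `s_i(α) = α - (α, e_i) e_i`. -/
def srefl (t h : A → V) (i : V) (α : V → ℤ) : V → ℤ :=
  fun j => α j - cartan t h α (evec i) * evec i j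

/-- Multiplicative pairing `q^α = ∏ i, q i ^ α i`. -/
def qpow (q : V → ℂˣ) (α : V → ℤ) : ℂˣ := ∏ i, q i ^ α i

/-- `p(α) = 1 - ⟨α,α⟩`. -/
def pfun (t h : A → V) (α : V → ℤ) : ℤ := 1 - euler t h α α

/-- Adjacency of two vertices in the underlying graph. -/
def adj (t h : A → V) (i j : V) : Prop :=
  ∃ a : A, (t a = i ∧ h a = j) ∨ (t a = j ∧ h a = i)

/-- The support of `α` is connected. -/
def connSupp (t h : A → V) (α : V → ℤ) : Prop :=
  ∀ i j, α i ≠ 0 → α j ≠ 0 →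
    Relation.ReflTransGen (fun x y => adj t h x y ∧ α x ≠ 0 ∧ α y ≠ 0) i j

/-- The fundamental region: nonzero, nonnegative, connected support,
`(α, e_i) ≤ 0` for all vertices `i`. -/
def fundRegion (t h : A → V) (α : V → ℤ) : Prop :=
  α ≠ 0 ∧ (∀ i, 0 ≤ α i) ∧ connSupp t h α ∧ ∀ i, cartan t h α (evec i) ≤ 0

/-- Roots of the quiver: obtained from coordinate vectors at loopfree vertices
(real roots) or from `±` elements of the fundamental region (imaginary roots)
by sequences of simple reflections at loopfree vertices. -/
inductive IsRoot (t h : A → V) : (V → ℤ) → Prop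
  | real (i : V) : loopfree t h i → IsRoot t h (evec i)
  | fund (α : V → ℤ) : fundRegion t h α → IsRoot t h α
  | fundNeg (α : V → ℤ) : fundRegion t h α → IsRoot t h (-α)
  | reflect (α : V → ℤ) (i : V) : loopfree t h i → IsRoot t h α →
      IsRoot t h (srefl t h i α)

/-- `N_{q,θ}`: nonnegative vectors with `q^α = 1` and `θ·α = 0`. -/
def Nqt (q : V → ℂˣ) (θ : V → ℤ) (α : V → ℤ) : Prop :=
  (∀ i, 0 ≤ α i) ∧ qpow q α = 1 ∧ (∑ i, θ i * α i) = 0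

/-- Positive roots in `N_{q,θ}`. -/
def Rplus (t h : A → V) (q : V → ℂˣ) (θ : V → ℤ) (α : V → ℤ) : Prop :=
  IsRoot t h α ∧ Nqt q θ α

/-- The set `Σ_{q,θ}`: positive roots whose `p`-value strictly exceeds the total
`p`-value of any decomposition into at least two positive roots in `R^+_{q,θ}`. -/
def InSigma (t h : A → V) (q : V → ℂˣ) (θ : V → ℤ) (α : V → ℤ) : Prop :=
  Rplus t h q θ α ∧
    ∀ L : List (V → ℤ), 2 ≤ L.length → (∀ β ∈ L, Rplus t h q θ β) →
      L.sum = α → (L.map (pfun t h)).sum < pfun t h α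

/-- Flatness: every decomposition of `α` into positive roots in `R^+_{q,θ}` has
total `p`-value at most `p(α)`. -/
def Flat (t h : A → V) (q : V → ℂˣ) (θ : V → ℤ) (α : V → ℤ) : Prop :=
  ∀ L : List (V → ℤ), (∀ β ∈ L, Rplus t h q θ β) →
    L.sum = α → (L.map (pfun t h)).sum ≤ pfun t h α

section Aux

variable (t h : A → V)

lemma euler_smulL (m : ℤ) (α β : V → ℤ) :
    euler t h (fun i => m * α i) β = m * euler t h α β := by
  simp only [euler, mul_sub, Finset.mul_sum, mul_assoc]

lemma euler_smulR (m : ℤ) (α β : V → ℤ) :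
    euler t h α (fun i => m * β i) = m * euler t h α β := by
  simp only [euler, mul_sub, Finset.mul_sum]
  congr 1 <;> (apply Finset.sum_congr rfl; intros; ring)

lemma euler_subL (α β γ : V → ℤ) :
    euler t h (fun i => α i - β i) γ = euler t h α γ - euler t h β γ := by
  simp only [euler, sub_mul, Finset.sum_sub_distrib]
  ring

lemma euler_subR (α β γ : V → ℤ) :
    euler t h α (fun i => β i - γ i) = euler t h α β - euler t h α γ := by
  simp only [euler, mul_sub, Finset.sum_sub_distrib]
  ring

lemma cartan_smulL (m : ℤ) (α β : V → ℤ) :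
    cartan t h (fun i => m * α i) β = m * cartan t h α β := by
  simp only [cartan, euler_smulL, euler_smulR]; ring

lemma cartan_smulR (m : ℤ) (α β : V → ℤ) :
    cartan t h α (fun i => m * β i) = m * cartan t h α β := by
  simp only [cartan, euler_smulL, euler_smulR]; ring

lemma cartan_subL (α β γ : V → ℤ) :
    cartan t h (fun i => α i - β i) γ = cartan t h α γ - cartan t h β γ := by
  simp only [cartan, euler_subL, euler_subR]; ring

lemma cartan_subR (α β γ : V → ℤ) :
    cartan t h α (fun i => β i - γ i) = cartan t h α β - cartan t h α γ := by
  simp only [cartan, euler_subL, euler_subR]; ring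

lemma cartan_comm (α β : V → ℤ) : cartan t h α β = cartan t h β α := by
  simp [cartan, add_comm]

lemma euler_evec_right (α : V → ℤ) (j : V) :
    euler t h α (evec j) = α j - ∑ a, if h a = j then α (t a) else 0 := by
  simp [euler, evec, mul_ite, mul_one, mul_zero, Finset.sum_ite_eq']

lemma euler_evec_left (α : V → ℤ) (j : V) :
    euler t h (evec j) α = α j - ∑ a, if t a = j then α (h a) else 0 := by
  simp [euler, evec, ite_mul, one_mul, zero_mul, Finset.sum_ite_eq']

lemma euler_evec_self (i : V) (hi : loopfree t h i) :
    euler t h (evec i) (evec i) = 1 := by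
  rw [euler_evec_left]
  have h0 : ∀ a ∈ (Finset.univ : Finset A),
      (if t a = i then evec i (h a) else 0 : ℤ) = 0 := by
    intro a _
    by_cases h1 : t a = i
    · simp only [h1, if_true, evec]
      by_cases h2 : h a = i
      · exact absurd ⟨h1, h2⟩ (hi a)
      · simp [h2]
    · simp [h1]
  rw [Finset.sum_eq_zero h0]
  simp [evec]

lemma cartan_evec_self (i : V) (hi : loopfree t h i) :
    cartan t h (evec i) (evec i) = 2 := by
  simp [cartan, euler_evec_self t h i hi]

lemma euler_right_decomp (α β : V → ℤ) :
    euler t h α β = ∑ j, β j * euler t h α (evec j) := by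
  simp only [euler_evec_right, mul_sub]
  rw [Finset.sum_sub_distrib]
  have h1 : ∑ j, β j * α j = ∑ i, α i * β i :=
    Finset.sum_congr rfl fun i _ => mul_comm _ _
  have h2 : ∑ j, β j * ∑ a, (if h a = j then α (t a) else 0)
      = ∑ a, α (t a) * β (h a) := by
    have h3 : ∀ j, β j * ∑ a, (if h a = j then α (t a) else 0)
        = ∑ a, (if h a = j then β (h a) * α (t a) else 0) := by
      intro j
      rw [Finset.mul_sum]
      apply Finset.sum_congr rfl
      intro a _
      by_cases hj : h a = j <;> simp [hj]
    simp only [h3]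
    rw [Finset.sum_comm]
    apply Finset.sum_congr rfl
    intro a _
    rw [Finset.sum_ite_eq]
    simp [mul_comm]
  rw [h1, h2, euler]

lemma euler_left_decomp (α β : V → ℤ) :
    euler t h β α = ∑ j, β j * euler t h (evec j) α := by
  simp only [euler_evec_left, mul_sub]
  rw [Finset.sum_sub_distrib]
  have h1 : ∑ j, β j * α j = ∑ i, β i * α i := rfl
  have h2 : ∑ j, β j * ∑ a, (if t a = j then α (h a) else 0)
      = ∑ a, β (t a) * α (h a) := by
    have h3 : ∀ j, β j * ∑ a, (if t a = j then α (h a) else 0)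
        = ∑ a, (if t a = j then β (t a) * α (h a) else 0) := by
      intro j
      rw [Finset.mul_sum]
      apply Finset.sum_congr rfl
      intro a _
      by_cases hj : t a = j <;> simp [hj]
    simp only [h3]
    rw [Finset.sum_comm]
    apply Finset.sum_congr rfl
    intro a _
    rw [Finset.sum_ite_eq]
    simp
  rw [h1, h2, euler]

lemma cartan_right_decomp (α β : V → ℤ) :
    cartan t h α β = ∑ j, β j * cartan t h α (evec j) := by
  simp only [cartan]
  rw [euler_right_decomp t h α β, euler_left_decomp t h α β,
    ← Finset.sum_add_distrib]
  apply Finset.sum_congr rfl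
  intro j _
  ring

lemma cartan_fund_nonpos {α : V → ℤ} (hf : fundRegion t h α) :
    cartan t h α α ≤ 0 := by
  rw [cartan_right_decomp]
  apply Finset.sum_nonpos
  intro j _
  exact mul_nonpos_of_nonneg_of_nonpos (hf.2.1 j) (hf.2.2.2 j)

lemma cartan_neg_neg (α : V → ℤ) : cartan t h (-α) (-α) = cartan t h α α := by
  simp [cartan, euler, neg_mul_neg]

lemma cartan_srefl_evec (i : V) (α : V → ℤ) (hi : loopfree t h i) :
    cartan t h (srefl t h i α) (evec i) = - cartan t h α (evec i) := by
  show cartan t h (fun j => α j - cartan t h α (evec i) * evec i j) (evec i) = _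
  rw [cartan_subL, cartan_smulL, cartan_evec_self t h i hi]
  ring

lemma srefl_srefl (i : V) (α : V → ℤ) (hi : loopfree t h i) :
    srefl t h i (srefl t h i α) = α := by
  funext j
  show srefl t h i α j - cartan t h (srefl t h i α) (evec i) * evec i j = α j
  rw [cartan_srefl_evec t h i α hi]
  show (α j - cartan t h α (evec i) * evec i j) - _ = α j
  ring

lemma srefl_smul (i : V) (m : ℤ) (α : V → ℤ) :
    srefl t h i (fun j => m * α j) = fun j => m * srefl t h i α j := by
  funext j
  show m * α j - cartan t h (fun k => m * α k) (evec i) * evec i j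
      = m * (α j - cartan t h α (evec i) * evec i j)
  rw [cartan_smulL]
  ring

lemma cartan_srefl_self (i : V) (α : V → ℤ) (hi : loopfree t h i) :
    cartan t h (srefl t h i α) (srefl t h i α) = cartan t h α α := by
  show cartan t h (fun j => α j - cartan t h α (evec i) * evec i j)
      (fun j => α j - cartan t h α (evec i) * evec i j) = _
  simp only [cartan_subL, cartan_subR, cartan_smulL, cartan_smulR,
    cartan_evec_self t h i hi]
  rw [cartan_comm t h (evec i) α]
  ring

lemma root_cartan_le_two {α : V → ℤ} (hr : IsRoot t h α) :
    cartan t h α α ≤ 2 := by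
  induction hr with
  | real i hi => rw [cartan_evec_self t h i hi]
  | fund α hf => linarith [cartan_fund_nonpos t h hf]
  | fundNeg α hf =>
    rw [cartan_neg_neg]
    linarith [cartan_fund_nonpos t h hf]
  | reflect α i hi hr ih => rwa [cartan_srefl_self t h i α hi]

lemma fundRegion_of_smul (m : ℕ) (hm : 2 ≤ m) {α β : V → ℤ}
    (hf : fundRegion t h α) (hb : α = fun i => (m : ℤ) * β i) :
    fundRegion t h β := by
  obtain ⟨hne, hpos, hconn, hcar⟩ := hf
  have hm0 : (0 : ℤ) < m := by exact_mod_cast (by omega : 0 < m)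
  refine ⟨?_, ?_, ?_, ?_⟩
  · intro h0
    apply hne
    rw [hb, h0]
    funext i
    simp
  · intro i
    have := hpos i
    simp only [hb] at this
    by_contra hlt
    push_neg at hlt
    nlinarith
  · intro i j hi hj
    have hsupp : ∀ k, β k ≠ 0 → α k ≠ 0 := by
      intro k hk
      simp only [hb]
      exact mul_ne_zero (by positivity) hk
    have hsupp' : ∀ k, α k ≠ 0 → β k ≠ 0 := by
      intro k hk h0
      apply hk
      simp only [hb, h0, mul_zero]
    have := hconn i j (hsupp i hi) (hsupp j hj)
    refine Relation.ReflTransGen.mono ?_ _ _ this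
    rintro x y ⟨ha, hx, hy⟩
    exact ⟨ha, hsupp' x hx, hsupp' y hy⟩
  · intro i
    have := hcar i
    simp only [hb] at this
    rw [cartan_smulL] at this
    by_contra hp
    push_neg at hp
    nlinarith

lemma isRoot_of_smul (m : ℕ) (hm : 2 ≤ m) {α : V → ℤ} (hr : IsRoot t h α) :
    ∀ β : V → ℤ, α = (fun i => (m : ℤ) * β i) → IsRoot t h β := by
  induction hr with
  | real i hi =>
    intro β hb
    exfalso
    have h1 : (1 : ℤ) = m * β i := by
      have := congrFun hb i
      simpa [evec] using this
    have hd : (m : ℤ) ∣ 1 := ⟨β i, h1⟩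
    have h2 := Int.le_of_dvd one_pos hd
    have h3 : (2 : ℤ) ≤ m := by exact_mod_cast hm
    linarith
  | fund α hf =>
    intro β hb
    exact IsRoot.fund β (fundRegion_of_smul t h m hm hf hb)
  | fundNeg α hf =>
    intro β hb
    have hα : α = fun i => (m : ℤ) * (-β i) := by
      funext i
      have := congrFun hb i
      simp only [Pi.neg_apply] at this
      linarith
    have hfr : fundRegion t h (fun i => -β i) :=
      fundRegion_of_smul t h m hm hf hα
    have heq : β = -(fun i => -β i) := by funext i; simp
    rw [heq]
    exact IsRoot.fundNeg _ hfr
  | reflect α i hi hr ih =>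
    intro β hb
    have h1 : α = fun j => (m : ℤ) * (srefl t h i β) j := by
      calc α = srefl t h i (srefl t h i α) := (srefl_srefl t h i α hi).symm
        _ = srefl t h i (fun j => (m : ℤ) * β j) := by rw [hb]
        _ = fun j => (m : ℤ) * srefl t h i β j := srefl_smul t h i m β
    have h2 := ih _ h1
    have h3 := IsRoot.reflect _ i hi h2
    rwa [srefl_srefl t h i β hi] at h3

end Aux

/-- a `q`-divisible element of `Σ_{q,θ}` is anisotropic:
`p(α) > 1`, equivalently `(α,α) < 0`. -/
theorem qdivisible_in_sigma_anisotropic (t h : A → V) (q : V → ℂˣ)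
    (θ : V → ℤ) (α β : V → ℤ) (m : ℕ) (hm : 2 ≤ m)
    (hβ : Nqt q θ β) (hαβ : α = fun i => (m : ℤ) * β i)
    (hα : InSigma t h q θ α) :
    1 < pfun t h α ∧ cartan t h α α < 0 := by
  obtain ⟨⟨hroot, hN⟩, hsig⟩ := hα
  have hm2 : (2 : ℤ) ≤ (m : ℤ) := by exact_mod_cast hm
  set e := euler t h β β with he
  have heul : euler t h α α = (m : ℤ) * ((m : ℤ) * e) := by
    rw [hαβ, euler_smulL, euler_smulR]
  have hcar2 : cartan t h α α = 2 * euler t h α α := by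
    rw [cartan]; ring
  have hle := root_cartan_le_two t h hroot
  have h1 : (m : ℤ) * ((m : ℤ) * e) ≤ 1 := by linarith
  have hene : e ≠ 0 := by
    intro h0
    have hrβ : IsRoot t h β := isRoot_of_smul t h m hm hroot β hαβ
    have hRp : Rplus t h q θ β := ⟨hrβ, hβ⟩
    have hlen : 2 ≤ (List.replicate m β).length := by simpa using hm
    have hmem : ∀ γ ∈ List.replicate m β, Rplus t h q θ γ := by
      intro γ hγ
      rw [List.eq_of_mem_replicate hγ]
      exact hRp
    have hsum : (List.replicate m β).sum = α := by
      rw [List.sum_replicate, hαβ]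
      funext i
      simp [nsmul_eq_mul]
    have hlt := hsig _ hlen hmem hsum
    rw [List.map_replicate, List.sum_replicate] at hlt
    have hpβ : pfun t h β = 1 := by rw [pfun, ← he, h0]; ring
    have hpα : pfun t h α = 1 := by rw [pfun, heul, h0]; ring
    rw [hpβ, hpα] at hlt
    simp only [nsmul_eq_mul, mul_one] at hlt
    linarith
  have he0 : e < 0 := by
    by_contra hp
    push_neg at hp
    have h2 : 1 ≤ e := lt_of_le_of_ne hp (Ne.symm hene)
    have h4 : (4 : ℤ) ≤ (m : ℤ) * (m : ℤ) := by nlinarith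
    have h5 : (m : ℤ) * (m : ℤ) * 1 ≤ (m : ℤ) * (m : ℤ) * e :=
      mul_le_mul_of_nonneg_left h2 (by positivity)
    have h6 : (m : ℤ) * ((m : ℤ) * e) = (m : ℤ) * (m : ℤ) * e := by ring
    linarith
  have hneg : (m : ℤ) * ((m : ℤ) * e) < 0 :=
    mul_neg_of_pos_of_neg (by linarith)
      (mul_neg_of_pos_of_neg (by linarith) he0)
  constructor
  · rw [pfun, heul]
    linarith
  · rw [hcar2, heul]
    linarith
end

section
/- Let β be an anisotropic imaginary root (p(β) ≥ 2) and ν = (l_1,ν_1;…;l_k,ν_k) a weighted partition of n (so ν_1 ≥ … ≥ ν_k ≥ 1 and Σ l_i ν_i = n, l_i ≥ 1). Then the quantity d(ν) := 2(k + (p(β)−1) Σ_{i=1}^k ν_i²) satisfies d(ν) ≤ 2p(nβ) = 2(1 + n²(p(β)−1)), with equality if and only if ν = (1,n). -/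
open Finset

/-- for `p(β) = p ≥ 2` and a weighted partition
`ν = (l_1,ν_1;…;l_k,ν_k)` of `n`, the stratum dimension
`d(ν) = 2(k + (p-1) Σ ν_i²)` is at most `2 p(nβ) = 2(1 + n²(p-1))`,
with equality if and only if `ν = (1,n)`. -/
theorem stratum_dim_le (p n k : ℕ) (hp : 2 ≤ p) (l ν : Fin k → ℕ)
    (hl : ∀ i, 1 ≤ l i) (hν : ∀ i, 1 ≤ ν i)
    (hmono : ∀ i j : Fin k, i ≤ j → ν j ≤ ν i)
    (hsum : ∑ i, l i * ν i = n) :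
    2 * (k + (p - 1) * ∑ i, (ν i) ^ 2) ≤ 2 * (1 + n ^ 2 * (p - 1)) ∧
    (2 * (k + (p - 1) * ∑ i, (ν i) ^ 2) = 2 * (1 + n ^ 2 * (p - 1)) ↔
      (k = 1 ∧ (∀ i, l i = 1) ∧ (∀ i, ν i = n))) := by
  set q := p - 1 with hqdef
  have hq : 1 ≤ q := by omega
  have hT : (∑ i, ν i) ≤ n := by
    rw [← hsum]
    exact Finset.sum_le_sum fun i _ => Nat.le_mul_of_pos_left _ (hl i)
  rcases Nat.lt_or_ge k 2 with hk | hk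
  · interval_cases k
    · simp only [Finset.univ_eq_empty, Finset.sum_empty] at hsum ⊢
      constructor
      · omega
      · constructor
        · intro h; omega
        · rintro ⟨h1, -, -⟩; omega
    · simp only [Fin.sum_univ_one, Fin.forall_fin_one] at hsum ⊢
      have hl0 := hl 0
      have hν0 := hν 0
      subst hsum
      have key : ν 0 ^ 2 ≤ (l 0 * ν 0) ^ 2 :=
        Nat.pow_le_pow_left (Nat.le_mul_of_pos_left _ hl0) 2
      constructor
      · have := Nat.mul_le_mul_left q key
        nlinarith [this]
      · constructor
        · intro h
          have hl1 : l 0 = 1 := by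
            by_contra hc
            have h2 : 2 ≤ l 0 := by omega
            have h3 : 2 * ν 0 ≤ l 0 * ν 0 := Nat.mul_le_mul_right _ h2
            have h4 : (2 * ν 0) ^ 2 ≤ (l 0 * ν 0) ^ 2 := Nat.pow_le_pow_left h3 2
            have h5 := Nat.mul_le_mul_left q h4
            have h6 : 1 * 1 ≤ q * ν 0 ^ 2 :=
              Nat.mul_le_mul hq (by nlinarith [hν0])
            nlinarith [h, h5, h6]
          refine ⟨trivial, hl1, ?_⟩
          rw [hl1, one_mul]
        · rintro ⟨-, h2, h3⟩
          rw [h2, one_mul]; ring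
  · -- k ≥ 2 : strict inequality
    obtain ⟨m, rfl⟩ : ∃ m, k = m + 1 := ⟨k - 1, by omega⟩
    have hm : 1 ≤ m := by omega
    have hTk : m + 1 ≤ ∑ i, ν i := by
      calc (m + 1 : ℕ) = ∑ _i : Fin (m+1), 1 := by simp
        _ ≤ _ := Finset.sum_le_sum fun i _ => hν i
    have hνi : ∀ i : Fin (m+1), ν i + m ≤ ∑ j, ν j := by
      intro i
      have h1 : ν i + ∑ j ∈ univ.erase i, ν j = ∑ j, ν j :=
        Finset.add_sum_erase univ ν (mem_univ i)
      have h2 : (m : ℕ) = ∑ _j ∈ univ.erase i, 1 := by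
        simp [Finset.card_erase_of_mem]
      have h3 : ∑ _j ∈ univ.erase i, (1:ℕ) ≤ ∑ j ∈ univ.erase i, ν j :=
        Finset.sum_le_sum fun j _ => hν j
      omega
    have hS2 : (∑ i, (ν i)^2) + (∑ i, ν i) * m ≤ (∑ i, ν i) * (∑ i, ν i) := by
      have h := Finset.sum_le_sum fun i (_ : i ∈ univ) =>
        Nat.mul_le_mul_left (ν i) (hνi i)
      calc (∑ i, (ν i)^2) + (∑ i, ν i) * m
          = ∑ i, ν i * (ν i + m) := by
            simp [mul_add, Finset.sum_add_distrib, pow_two, Finset.sum_mul]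
        _ ≤ ∑ i, ν i * (∑ j, ν j) := h
        _ = (∑ i, ν i) * (∑ i, ν i) := by rw [← Finset.sum_mul]
    have hstrict : 2 * ((m+1) + q * ∑ i, (ν i) ^ 2) < 2 * (1 + n ^ 2 * q) := by
      set T := ∑ i, ν i with hTdef
      set S := ∑ i, (ν i)^2 with hSdef
      have h1 : q * S + q * (T * m) ≤ q * (T * T) := by
        have := Nat.mul_le_mul_left q hS2
        rwa [Nat.mul_add] at this
      have h2 : q * (T * T) ≤ q * (n * n) := Nat.mul_le_mul_left q (Nat.mul_le_mul hT hT)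
      have h4 : m * (m + 1) ≤ q * (T * m) := by
        calc m * (m + 1) = (m + 1) * m := Nat.mul_comm _ _
          _ ≤ T * m := Nat.mul_le_mul_right m hTk
          _ ≤ q * (T * m) := Nat.le_mul_of_pos_left _ hq
      have h6 : 2 * m ≤ m * (m + 1) := by nlinarith [hm]
      have h5 : n ^ 2 = n * n := sq n
      rw [h5]
      linarith [h1, h2, h4, h6, hm]
    refine ⟨le_of_lt hstrict, ?_⟩
    constructor
    · intro h; omega
    · rintro ⟨h1, -, -⟩; omega
end

section
/- Let p ≥ 2 and n ≥ 2 with (p,n) ≠ (2,2), and let ν ≠ (1,n) be a weighted partition of n. Then 2(1 + n²(p−1)) − 2(k + (p−1)Σ_{i=1}^k ν_i²) ≥ 8, unless (p,n) = (2,3) and ν = (1,2;1,1), or (p,n) = (3,2) and ν = (1,1;1,1) (i.e. the partition 1+1 of 2 with the two parts being a single part 1 of multiplicity 2, written as two unit parts). -/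
open Finset

lemma aux_sq_sum {ι : Type*} (s : Finset ι) (f : ι → ℕ) (hf : ∀ i ∈ s, 1 ≤ f i) :
    (∑ i ∈ s, (f i) ^ 2) + s.card * s.card ≤ (∑ i ∈ s, f i) ^ 2 + s.card := by
  induction s using Finset.cons_induction with
  | empty => simp
  | cons a s ha ih =>
    have hfa : 1 ≤ f a := hf a (Finset.mem_cons_self a s)
    have ih' := ih (fun i hi => hf i (Finset.mem_cons_of_mem hi))
    have hcard : s.card ≤ ∑ i ∈ s, f i := by
      calc s.card = ∑ _i ∈ s, 1 := by simp
      _ ≤ ∑ i ∈ s, f i := Finset.sum_le_sum (fun i hi => hf i (Finset.mem_cons_of_mem hi))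
    simp only [Finset.sum_cons, Finset.card_cons]
    nlinarith [ih', hcard, hfa]

set_option maxHeartbeats 1000000 in
/-- for `p ≥ 2`, `n ≥ 2`, `(p,n) ≠ (2,2)` and any weighted
partition `ν ≠ (1,n)` of `n`, the codimension is at least `8` unless
`(p,n) = (2,3)` with `ν = (1,2;1,1)` or `(p,n) = (3,2)` with
`ν = (1,1;1,1)`. -/
theorem stratum_codim_ge_eight (p n k : ℕ) (hp : 2 ≤ p) (hn : 2 ≤ n)
    (hpn : ¬(p = 2 ∧ n = 2)) (l ν : Fin k → ℕ)
    (hl : ∀ i, 1 ≤ l i) (hν : ∀ i, 1 ≤ ν i)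
    (hmono : ∀ i j : Fin k, i ≤ j → ν j ≤ ν i)
    (hsum : ∑ i, l i * ν i = n)
    (hne : ¬(k = 1 ∧ (∀ i, l i = 1) ∧ (∀ i, ν i = n))) :
    (p = 2 ∧ n = 3 ∧ k = 2 ∧ (∀ i, l i = 1) ∧
        (∃ i j : Fin k, i ≠ j ∧ ν i = 2 ∧ ν j = 1)) ∨
    (p = 3 ∧ n = 2 ∧ k = 2 ∧ (∀ i, l i = 1) ∧ (∀ i, ν i = 1)) ∨
    2 * (k + (p - 1) * ∑ i, (ν i) ^ 2) + 8 ≤ 2 * (1 + n ^ 2 * (p - 1)) := by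
  obtain ⟨q, rfl⟩ : ∃ q, p = q + 2 := ⟨p - 2, by omega⟩
  simp only [show q + 2 - 1 = q + 1 from rfl]
  have hq1 : 1 ≤ q + 1 := by omega
  have hk4 : k = 0 ∨ k = 1 ∨ k = 2 ∨ 3 ≤ k := by omega
  rcases hk4 with rfl | rfl | rfl | hk3
  · -- k = 0 : contradiction
    rw [Fin.sum_univ_zero] at hsum; omega
  · -- k = 1
    right; right
    simp only [Fin.sum_univ_one] at hsum ⊢
    have hl0 : 2 ≤ l 0 := by
      rcases Nat.lt_or_ge (l 0) 2 with h | h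
      · have hl1 : l 0 = 1 := by have := hl 0; omega
        exfalso
        apply hne
        refine ⟨rfl, fun i => by fin_cases i; exact hl1, fun i => ?_⟩
        fin_cases i
        simpa [hl1] using hsum
      · exact h
    have hν0 : 1 ≤ ν 0 := hν 0
    rcases Nat.lt_or_ge (ν 0) 2 with hb | hb
    · -- ν 0 = 1, n = l 0
      have hb1 : ν 0 = 1 := by omega
      rw [hb1]
      rcases Nat.lt_or_ge n 3 with hn2 | hn3
      · have hn2' : n = 2 := by omega
        have hq2 : 2 ≤ q + 1 := by omega
        rw [hn2']
        norm_num
        omega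
      · have h9 : 9 ≤ n ^ 2 := by nlinarith
        have h2 : (q+1) * 9 ≤ (q+1) * n ^ 2 := Nat.mul_le_mul_left _ h9
        nlinarith [h2, hq1]
    · -- ν 0 ≥ 2
      have hnv : 2 * ν 0 ≤ n := by
        calc 2 * ν 0 ≤ l 0 * ν 0 := Nat.mul_le_mul_right _ hl0
        _ = n := hsum
      have h2 : 4 * ν 0 ^ 2 ≤ n ^ 2 := by nlinarith [hnv]
      have h3 : (q+1) * (4 * ν 0 ^ 2) ≤ (q+1) * n ^ 2 := Nat.mul_le_mul_left _ h2
      have h4 : 4 ≤ (q+1) * ν 0 ^ 2 := by nlinarith [hq1, hb]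
      nlinarith [h3, h4]
  · -- k = 2
    simp only [Fin.sum_univ_two] at hsum ⊢
    have hba : ν 1 ≤ ν 0 := hmono 0 1 (by norm_num)
    have ha1 : 1 ≤ ν 0 := hν 0
    have hb1 : 1 ≤ ν 1 := hν 1
    have hl0 : 1 ≤ l 0 := hl 0
    have hl1 : 1 ≤ l 1 := hl 1
    have hmn : ν 0 + ν 1 ≤ n := by
      have h0 : ν 0 ≤ l 0 * ν 0 := Nat.le_mul_of_pos_left _ hl0
      have h1 : ν 1 ≤ l 1 * ν 1 := Nat.le_mul_of_pos_left _ hl1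
      omega
    rcases Nat.lt_or_ge (ν 0 * ν 1) 3 with hab | hab
    · -- ν0*ν1 ≤ 2 : (ν0,ν1) = (1,1) or (2,1)
      have hbb : ν 1 = 1 := by nlinarith [hab, hba, hb1]
      have ha3 : ν 0 ≤ 2 := by
        rw [hbb, mul_one] at hab; omega
      rcases Nat.lt_or_ge (ν 0) 2 with ha2 | ha2
      · -- ν0 = 1: n = l0 + l1 ≥ 2
        have haa : ν 0 = 1 := by omega
        rw [haa, hbb] at hsum ⊢
        simp only [mul_one, one_pow] at hsum ⊢
        rcases Nat.lt_or_ge n 3 with hn2 | hn3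
        · have hn2' : n = 2 := by omega
          have hl0' : l 0 = 1 := by omega
          have hl1' : l 1 = 1 := by omega
          rcases Nat.lt_or_ge q 2 with hp4 | hp4
          · have hp3 : q + 2 = 3 := by omega
            right; left
            refine ⟨hp3, hn2', trivial, fun i => by fin_cases i <;> assumption,
              fun i => by fin_cases i <;> assumption⟩
          · right; right
            have hq3 : 3 ≤ q + 1 := by omega
            rw [hn2']
            norm_num
            omega
        · right; right
          have h9 : 9 ≤ n ^ 2 := by nlinarith
          have h2 : (q+1) * 9 ≤ (q+1) * n ^ 2 := Nat.mul_le_mul_left _ h9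
          nlinarith [h2, hq1]
      · -- ν0 = 2, ν1 = 1: n = 2*l0 + l1 ≥ 3
        have haa : ν 0 = 2 := by omega
        rw [haa, hbb] at hsum ⊢
        rcases Nat.lt_or_ge n 4 with hn3 | hn4
        · have hn3' : n = 3 := by omega
          have hl0' : l 0 = 1 := by omega
          have hl1' : l 1 = 1 := by omega
          rcases Nat.lt_or_ge q 1 with hp3 | hp3
          · have hp2 : q + 2 = 2 := by omega
            left
            exact ⟨hp2, hn3', trivial, fun i => by fin_cases i <;> assumption,
              0, 1, by norm_num, haa, hbb⟩
          · right; right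
            have hq2 : 2 ≤ q + 1 := by omega
            rw [hn3']
            norm_num
            omega
        · right; right
          have h16 : 16 ≤ n ^ 2 := by nlinarith
          have h2 : (q+1) * 16 ≤ (q+1) * n ^ 2 := Nat.mul_le_mul_left _ h16
          norm_num
          nlinarith [h2, hq1]
    · -- ν0*ν1 ≥ 3
      right; right
      have h1 : ν 0 ^ 2 + ν 1 ^ 2 + 6 ≤ n ^ 2 := by nlinarith [hmn, hab]
      have h2 : (q+1) * (ν 0 ^ 2 + ν 1 ^ 2 + 6) ≤ (q+1) * n ^ 2 := Nat.mul_le_mul_left _ h1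
      nlinarith [h2, hq1]
  · -- k ≥ 3
    right; right
    have hcard : (Finset.univ : Finset (Fin k)).card = k := by simp
    have hS := aux_sq_sum (Finset.univ : Finset (Fin k)) ν (fun i _ => hν i)
    rw [hcard] at hS
    have hmn : (∑ i, ν i) ≤ n := by
      rw [← hsum]
      exact Finset.sum_le_sum (fun i _ => Nat.le_mul_of_pos_left (ν i) (hl i))
    have hm2 : (∑ i, ν i) ^ 2 ≤ n ^ 2 := Nat.pow_le_pow_left hmn 2
    have h1 : (∑ i, (ν i) ^ 2) + k * k ≤ n ^ 2 + k := by omega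
    have h2 : (q+1) * ((∑ i, (ν i) ^ 2) + k * k) ≤ (q+1) * (n ^ 2 + k) :=
      Nat.mul_le_mul_left _ h1
    have h3 : k + k + 3 ≤ k * k := by nlinarith [hk3]
    have h4 : (q+1) * (k + k + 3) ≤ (q+1) * (k * k) := Nat.mul_le_mul_left _ h3
    have h5 : k + 3 ≤ (q+1) * (k + 3) := Nat.le_mul_of_pos_left _ hq1
    nlinarith [h2, h4, h5, hq1]
end

section
/- Let Q be a crab-shaped quiver with g ≥ 1 loops at the central vertex and k legs, and let α ∈ ℕ^{Q_0} be sincere with ⟨α,α⟩ = −1 and α in the fundamental region. Then (Q,α) is one of exactly two cases: (i) g = 2, k = 0, and α = (1) at the single vertex; or (ii) g = 1, k = 1 with leg length 1, and α = (2,1) (central dimension 2, leg dimension 1). -/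
open Finset

/-- Sum of squares of the dimensions along a leg. -/
def legSq (l : List ℤ) : ℤ := (l.map (fun a => a ^ 2)).sum

/-- Sum of products of adjacent dimensions along a leg. -/
def legAdj : List ℤ → ℤ
  | [] => 0
  | [_] => 0
  | a :: b :: rest => a * b + legAdj (b :: rest)

/-- The fundamental-region inequalities `(α, e_j) ≤ 0` along a leg with
dimensions `l`, the previous (inner) dimension being `n`
(`2 a_j ≤ a_{j-1} + a_{j+1}`, with `a_{last+1} = 0`). -/
def legFund : ℤ → List ℤ → Prop
  | _, [] => True
  | n, a :: rest => 2 * a ≤ n + rest.headI ∧ legFund a rest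

/-- `⟨α,α⟩` for a crab-shaped quiver with `g` loops at the central vertex of
dimension `n`, and the given multiset of legs. -/
def crabEuler (g : ℕ) (n : ℤ) (legs : Multiset (List ℤ)) : ℤ :=
  (1 - (g : ℤ)) * n ^ 2 +
    (legs.map (fun l => legSq l - n * l.headI - legAdj l)).sum

/-- Sincerity: all dimensions positive (and every leg nonempty). -/
def crabSincere (n : ℤ) (legs : Multiset (List ℤ)) : Prop :=
  1 ≤ n ∧ ∀ l ∈ legs, l ≠ [] ∧ ∀ a ∈ l, 1 ≤ a

/-- The fundamental-region inequalities for a crab-shaped quiver: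
`(α, e_v) ≤ 0` at the central vertex and `(α, e_j) ≤ 0` along every leg. -/
def crabFund (g : ℕ) (n : ℤ) (legs : Multiset (List ℤ)) : Prop :=
  2 * (1 - (g : ℤ)) * n ≤ (legs.map List.headI).sum ∧
    ∀ l ∈ legs, legFund n l

/-- The contribution of one leg to the Euler form. -/
def legT (n : ℤ) (l : List ℤ) : ℤ := legSq l - n * l.headI - legAdj l

lemma legT_cons (n a : ℤ) (rest : List ℤ) :
    legT n (a :: rest) = a * (a - n) + legT a rest := by
  cases rest with
  | nil => simp [legT, legSq, legAdj]; ring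
  | cons b r => simp [legT, legSq, legAdj]; ring

/-- Along a leg in the fundamental region, dimensions strictly decrease:
the head is strictly less than the previous dimension. -/
lemma leg_head_lt : ∀ (l : List ℤ) (n : ℤ), l ≠ [] → (∀ a ∈ l, 1 ≤ a) →
    legFund n l → 1 ≤ n → n ≤ l.headI → False := by
  intro l
  induction l with
  | nil => intro n h; exact absurd rfl h
  | cons a rest ih =>
    intro n _ hpos hf hn hle
    obtain ⟨h1, h2⟩ := hf
    cases rest with
    | nil =>
      simp [legFund] at h1 ⊢
      have ha : 1 ≤ a := hpos a (by simp)
      simp at hle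
      omega
    | cons b r =>
      have ha : 1 ≤ a := hpos a (by simp)
      refine ih a (by simp) (fun x hx => hpos x (by simp [hx])) h2 (by omega) ?_
      simp at hle h1 ⊢
      omega

lemma legT_bound : ∀ (l : List ℤ) (n : ℤ), l ≠ [] → (∀ a ∈ l, 1 ≤ a) →
    legFund n l → 1 ≤ n → 2 * legT n l ≤ -(n * l.headI) := by
  intro l
  induction l with
  | nil => intro n h; exact absurd rfl h
  | cons a rest ih =>
    intro n _ hpos hf hn
    obtain ⟨h1, h2⟩ := hf
    have ha : 1 ≤ a := hpos a (by simp)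
    rw [legT_cons]
    cases rest with
    | nil =>
      simp [legT, legSq, legAdj] at h1 ⊢
      nlinarith
    | cons b r =>
      have hb : 1 ≤ b := hpos b (by simp)
      have := ih a (by simp) (fun x hx => hpos x (by simp [hx])) h2 (by omega)
      simp at h1 this ⊢
      nlinarith

lemma legT_le_neg_one (l : List ℤ) (n : ℤ) (h0 : l ≠ []) (hpos : ∀ a ∈ l, 1 ≤ a)
    (hf : legFund n l) (hn : 1 ≤ n) : legT n l ≤ -1 := by
  have h := legT_bound l n h0 hpos hf hn
  have hh : 1 ≤ l.headI := by
    cases l with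
    | nil => exact absurd rfl h0
    | cons a r => exact hpos a (by simp)
  nlinarith

lemma legT_eq_neg_one (l : List ℤ) (n : ℤ) (h0 : l ≠ []) (hpos : ∀ a ∈ l, 1 ≤ a)
    (hf : legFund n l) (hn : 1 ≤ n) (he : legT n l = -1) : n = 2 ∧ l = [1] := by
  cases l with
  | nil => exact absurd rfl h0
  | cons a rest =>
    obtain ⟨h1, h2⟩ := hf
    have ha : 1 ≤ a := hpos a (by simp)
    rw [legT_cons] at he
    cases rest with
    | nil =>
      simp [legT, legSq, legAdj] at he h1
      constructor
      · nlinarith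
      · have : a = 1 := by nlinarith
        simp [this]
    | cons b r =>
      exfalso
      have hb : 1 ≤ b := hpos b (by simp)
      have hT := legT_le_neg_one (b :: r) a (by simp)
        (fun x hx => hpos x (by simp [hx])) h2 (by omega)
      have han : n ≤ a := by nlinarith
      exact leg_head_lt (a :: (b :: r)) n (by simp) hpos ⟨h1, h2⟩ hn (by simpa)

/-- for a crab-shaped quiver with `g ≥ 1` loops and a sincere
dimension vector in the fundamental region with `⟨α,α⟩ = -1`, the only
possibilities are: one vertex with two loops and dimension `1`; or one loop at
the central vertex of dimension `2` with a single leg of length `1` and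
dimension `1`. -/
theorem crab_p2_classification (g : ℕ) (n : ℤ) (legs : Multiset (List ℤ))
    (hg : 1 ≤ g) (hs : crabSincere n legs) (hf : crabFund g n legs)
    (he : crabEuler g n legs = -1) :
    (g = 2 ∧ Multiset.card legs = 0 ∧ n = 1) ∨
    (g = 1 ∧ n = 2 ∧ legs = {[1]}) := by
  obtain ⟨hn, hsin⟩ := hs
  obtain ⟨_, hfund⟩ := hf
  have hsum : (legs.map (fun l => legSq l - n * l.headI - legAdj l)).sum ≤
      -(Multiset.card legs : ℤ) := by
    have h := Multiset.sum_le_card_nsmul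
      (legs.map (fun l => legSq l - n * l.headI - legAdj l)) (-1 : ℤ) ?_
    · rw [Multiset.card_map] at h
      simpa [smul_eq_mul] using h
    · intro x hx
      obtain ⟨l, hl, rfl⟩ := Multiset.mem_map.mp hx
      exact legT_le_neg_one l n (hsin l hl).1 (hsin l hl).2 (hfund l hl) hn
  rw [crabEuler] at he
  rcases Nat.lt_or_ge g 2 with hg2 | hg2
  · -- g = 1
    right
    have hg1 : g = 1 := by omega
    subst hg1
    have he2 : (legs.map (fun l => legSq l - n * l.headI - legAdj l)).sum = -1 := by
      push_cast at he; linear_combination he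
    clear he
    have hcard : Multiset.card legs ≤ 1 := by
      by_contra h
      push_neg at h
      have : (2 : ℤ) ≤ (Multiset.card legs : ℤ) := by exact_mod_cast h
      omega
    interval_cases h : Multiset.card legs
    · rw [Multiset.card_eq_zero.mp h] at he2
      simp at he2
    · obtain ⟨l, rfl⟩ := Multiset.card_eq_one.mp h
      simp [legT] at he2 ⊢
      have := legT_eq_neg_one l n (hsin l (by simp)).1 (hsin l (by simp)).2
        (hfund l (by simp)) hn (by simpa [legT] using he2)
      exact ⟨this.1, this.2⟩
  · -- g ≥ 2
    left
    have hgz : (2 : ℤ) ≤ (g : ℤ) := by exact_mod_cast hg2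
    have hn2 : 1 ≤ n ^ 2 := by nlinarith
    have hne : (1 - (g : ℤ)) * n ^ 2 ≤ -1 := by nlinarith
    have hcard0 : Multiset.card legs = 0 := by
      by_contra h
      have h1 : (1 : ℤ) ≤ (Multiset.card legs : ℤ) := by
        exact_mod_cast Nat.one_le_iff_ne_zero.mpr h
      omega
    rw [Multiset.card_eq_zero.mp hcard0] at he
    simp at he
    have hnn : n = 1 := by nlinarith
    refine ⟨?_, hcard0, hnn⟩
    subst hnn
    have : (g : ℤ) = 2 := by linarith [he]
    exact_mod_cast this
end

section
/- Let Q be a crab-shaped quiver with g loops at the central vertex v and k legs, and α a sincere dimension vector with central value n. If g ≥ 1 and k ≥ 1 then (α, e_v) = 2(1−g)n − Σ_{i=1}^k α_{i,1} < 0; moreover if additionally α is in the fundamental region with (α,e_v) = −1 then g = 1, n = 2, k = 1 and α_{1,1} = 1. -/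
open Finset

lemma legHead_lt (l : List ℤ) (m : ℤ) (hne : l ≠ [])
    (hpos : ∀ a ∈ l, 1 ≤ a) (hf : legFund m l) : l.headI < m := by
  induction l generalizing m with
  | nil => exact absurd rfl hne
  | cons a rest ih =>
    obtain ⟨h1, h2⟩ := hf
    have ha : 1 ≤ a := hpos a (by simp)
    cases rest with
    | nil => simp [List.headI] at h1 ⊢; linarith
    | cons b r =>
      have hb : (b :: r).headI < a := by
        refine ih a (by simp) (fun x hx => hpos x (by simp [hx])) h2
      simp only [List.headI] at h1 hb ⊢
      linarith

/-- for a crab-shaped quiver with `g ≥ 1` loops, `k ≥ 1` legs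
and a sincere dimension vector, the central Cartan pairing
`(α,e_v) = 2(1-g)n - Σ α_{i,1}` is negative; moreover if in addition `α` is
in the fundamental region with `⟨α,α⟩ = -1` and `(α,e_v) = -1`, then `g = 1`,
`n = 2`, there is exactly one leg, and its first dimension is `1`. -/
theorem crab_central_pairing (g : ℕ) (n : ℤ) (legs : Multiset (List ℤ))
    (hg : 1 ≤ g) (hk : 1 ≤ Multiset.card legs)
    (hs : crabSincere n legs) :
    2 * (1 - (g : ℤ)) * n - (legs.map List.headI).sum < 0 ∧
    ((crabFund g n legs ∧ crabEuler g n legs = -1 ∧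
        2 * (1 - (g : ℤ)) * n - (legs.map List.headI).sum = -1) →
      (g = 1 ∧ n = 2 ∧ Multiset.card legs = 1 ∧
        ∀ l ∈ legs, l.headI = 1)) := by

  obtain ⟨hn, hl⟩ := hs
  have hg1 : (1:ℤ) ≤ (g:ℤ) := by exact_mod_cast hg
  have hS : (Multiset.card legs : ℤ) ≤ (legs.map List.headI).sum := by
    have h := Multiset.card_nsmul_le_sum (s := legs.map List.headI) (a := (1:ℤ)) ?_
    · simpa using h
    · intro x hx
      obtain ⟨l, hl', rfl⟩ := Multiset.mem_map.mp hx
      obtain ⟨hne, hpos⟩ := hl l hl'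
      cases l with
      | nil => exact absurd rfl hne
      | cons a r => exact hpos a (by simp)
  have hk1 : (1:ℤ) ≤ (Multiset.card legs : ℤ) := by exact_mod_cast hk
  have h0 : 2 * (1 - (g:ℤ)) * n ≤ 0 := by nlinarith
  constructor
  · linarith
  · rintro ⟨⟨hcf, hlegf⟩, heuler, hev⟩
    have hsum1 : (legs.map List.headI).sum = 1 := by
      have hle : (legs.map List.headI).sum ≤ 1 := by linarith
      linarith
    have hcard : Multiset.card legs = 1 := by
      by_contra h
      have h2 : (2:ℤ) ≤ (Multiset.card legs : ℤ) := by
        have : 2 ≤ Multiset.card legs := by omega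
        exact_mod_cast this
      linarith
    have hgz : 2 * (1 - (g:ℤ)) * n = 0 := by linarith
    have hgeq : g = 1 := by
      rcases mul_eq_zero.mp hgz with h | h
      · have : (g:ℤ) = 1 := by linarith
        exact_mod_cast this
      · linarith
    obtain ⟨l, rfl⟩ := Multiset.card_eq_one.mp hcard
    have hlmem : l ∈ ({l} : Multiset (List ℤ)) := by simp
    obtain ⟨hne, hpos⟩ := hl l hlmem
    have hfund : legFund n l := hlegf l hlmem
    have hhead : l.headI = 1 := by simpa using hsum1
    have hleq : l = [1] := by
      cases l with
      | nil => exact absurd rfl hne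
      | cons a rest =>
        have ha : a = 1 := by simpa using hhead
        subst ha
        cases rest with
        | nil => rfl
        | cons b r =>
          have hb : (b :: r).headI < 1 :=
            legHead_lt (b :: r) 1 (by simp) (fun x hx => hpos x (by simp [hx])) hfund.2
          have hb1 : 1 ≤ b := hpos b (by simp)
          simp only [List.headI] at hb
          linarith
    subst hleq
    have hE : crabEuler g n {[1]} = 1 - n := by
      simp [crabEuler, legSq, legAdj, hgeq]
    rw [hE] at heuler
    refine ⟨hgeq, by linarith, by simp, ?_⟩
    intro l hlmem'
    rw [Multiset.mem_singleton.mp hlmem']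
    rfl
end
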